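/- Let X be a locally path connected and semilocally 1-connected topological space. Then the fundamental groupoid π₁X is a compatible locally trivial groupoid on X: the cover 𝒰 consisting of all open, path connected subsets U of X such that any two paths in U with the same endpoints are homotopic in X is an open cover of X which is a base for its topology, and the local sections s_{x,i} : U_i → (π₁X)_x defined by sending y ∈ U_i to the homotopy class of a path in U_i from x to y are well defined sections of β satisfying the compatibility condition. -/

import Mathlib

universe u v w u₁ v₁ u₂ v₂

/-- A groupoid with set of morphisms `G` and set of objects `X`: a small category in which
every morphism is invertible, presented with a total multiplication map which is only
required to satisfy the groupoid laws on composable pairs. -/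
structure GroupoidOn (G : Type u) (X : Type v) where
  /-- initial (source) point map `α` -/
  src : G → X
  /-- final (target) point map `β` -/
  tgt : G → X
  /-- object inclusion `ε`, sending an object to its identity -/
  e : X → G
  /-- partial multiplication (meaningful when `tgt a = src b`) -/
  mul : G → G → G
  /-- inversion -/
  inv : G → G
  src_e : ∀ x, src (e x) = x
  tgt_e : ∀ x, tgt (e x) = x
  src_mul : ∀ a b, tgt a = src b → src (mul a b) = src a
  tgt_mul : ∀ a b, tgt a = src b → tgt (mul a b) = tgt b
  mul_assoc : ∀ a b c, tgt a = src b → tgt b = src c →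
    mul (mul a b) c = mul a (mul b c)
  e_mul : ∀ a, mul (e (src a)) a = a
  mul_e : ∀ a, mul a (e (tgt a)) = a
  src_inv : ∀ a, src (inv a) = tgt a
  tgt_inv : ∀ a, tgt (inv a) = src a
  mul_inv : ∀ a, mul a (inv a) = e (src a)
  inv_mul : ∀ a, mul (inv a) a = e (tgt a)

namespace GroupoidOn

variable {G : Type u} {X : Type v}

/-- The set of identities `O_G` of the groupoid, viewed inside `G`. -/
def objSet (𝒢 : GroupoidOn G X) : Set G := Set.range 𝒢.e

/-- The star `G_x = {a : α a = x}` at an object `x`. -/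
def star (𝒢 : GroupoidOn G X) (x : X) : Set G := {a | 𝒢.src a = x}

/-- the set `G(x,y)` of morphisms from `x` to `y` -/
def hom (𝒢 : GroupoidOn G X) (x y : X) : Set G := {a | 𝒢.src a = x ∧ 𝒢.tgt a = y}

/-- `W⁻¹` -/
def invSet (𝒢 : GroupoidOn G X) (W : Set G) : Set G := 𝒢.inv '' W

/-- `W²`, the set of products of two composable elements of `W` -/
def sq (𝒢 : GroupoidOn G X) (W : Set G) : Set G :=
  {c | ∃ a ∈ W, ∃ b ∈ W, 𝒢.tgt a = 𝒢.src b ∧ c = 𝒢.mul a b}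

/-- the elements of `G` expressible as finite products of elements of `W` -/
inductive IsGen (𝒢 : GroupoidOn G X) (W : Set G) : G → Prop
  | base {a : G} : a ∈ W → IsGen 𝒢 W a
  | mul {a b : G} : IsGen 𝒢 W a → IsGen 𝒢 W b → 𝒢.tgt a = 𝒢.src b → IsGen 𝒢 W (𝒢.mul a b)

/-- `W` generates the groupoid: every element is a finite product of elements of `W`. -/
def Generates (𝒢 : GroupoidOn G X) (W : Set G) : Prop := ∀ g : G, 𝒢.IsGen W g

/-- a wide subgroupoid: contains all identities, closed under inversion and multiplication. -/
structure IsWideSubgroupoid (𝒢 : GroupoidOn G X) (W : Set G) : Prop where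
  e_mem : ∀ x, 𝒢.e x ∈ W
  inv_mem : ∀ a ∈ W, 𝒢.inv a ∈ W
  mul_mem : ∀ a ∈ W, ∀ b ∈ W, 𝒢.tgt a = 𝒢.src b → 𝒢.mul a b ∈ W

end GroupoidOn

/-- a morphism of groupoids (a functor): `f` on morphisms, `fo` on objects. -/
structure IsGrpdHom {G : Type u} {X : Type v} {H : Type u₁} {Y : Type v₁}
    (𝒢 : GroupoidOn G X) (ℋ : GroupoidOn H Y) (f : G → H) (fo : X → Y) : Prop where
  src : ∀ a, ℋ.src (f a) = fo (𝒢.src a)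
  tgt : ∀ a, ℋ.tgt (f a) = fo (𝒢.tgt a)
  e : ∀ x, f (𝒢.e x) = ℋ.e (fo x)
  mul : ∀ a b, 𝒢.tgt a = 𝒢.src b → f (𝒢.mul a b) = ℋ.mul (f a) (f b)

/-- a pregroupoid morphism defined on a subset `W ⊆ G` containing the identities:
preserves sources, targets, identities, and products which are defined and stay in `W`. -/
structure IsPreGrpdHom {G : Type u} {X : Type v} {H : Type u₁} {Y : Type v₁}
    (𝒢 : GroupoidOn G X) (W : Set G) (ℋ : GroupoidOn H Y) (f : G → H) (fo : X → Y) : Prop where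
  src : ∀ a ∈ W, ℋ.src (f a) = fo (𝒢.src a)
  tgt : ∀ a ∈ W, ℋ.tgt (f a) = fo (𝒢.tgt a)
  e : ∀ x, f (𝒢.e x) = ℋ.e (fo x)
  mul : ∀ a ∈ W, ∀ b ∈ W, 𝒢.tgt a = 𝒢.src b → 𝒢.mul a b ∈ W →
    f (𝒢.mul a b) = ℋ.mul (f a) (f b)

/-- a topological groupoid: all structure maps are continuous (multiplication on the
pullback `{(a,b) : β a = α b}` with the subspace topology). -/
structure IsTopGroupoid {G : Type u} {X : Type v} [TopologicalSpace G] [TopologicalSpace X]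
    (𝒢 : GroupoidOn G X) : Prop where
  cont_src : Continuous 𝒢.src
  cont_tgt : Continuous 𝒢.tgt
  cont_e : Continuous 𝒢.e
  cont_inv : Continuous 𝒢.inv
  cont_mul : Continuous fun p : {p : G × G // 𝒢.tgt p.1 = 𝒢.src p.2} => 𝒢.mul p.1.1 p.1.2

/-- `𝒢` is a topological groupoid for the explicitly given topology `τG` on `G`. -/
def TopGroupoidWith {G : Type u} {X : Type v} [TopologicalSpace X] (𝒢 : GroupoidOn G X)
    (τG : TopologicalSpace G) : Prop :=
  @IsTopGroupoid G X τG _ 𝒢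

/-- the subspace topology on a subset, for an explicitly given topology. -/
def subTop {A : Type u} (τ : TopologicalSpace A) (S : Set A) : TopologicalSpace ↥S :=
  TopologicalSpace.induced Subtype.val τ

/-- continuity of the groupoid difference map `δ(a,b) = a⁻¹ b` on the pullback
`G ×_α G`, for an explicitly given topology on `G`. -/
def DeltaContinuousWith {G : Type u} {X : Type v} (𝒢 : GroupoidOn G X)
    (τG : TopologicalSpace G) : Prop := by
  letI := τG
  exact Continuous fun p : {p : G × G // 𝒢.src p.1 = 𝒢.src p.2} => 𝒢.mul (𝒢.inv p.1.1) p.1.2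

/-- `f` maps `S` homeomorphically onto `T` (for explicitly given topologies). -/
def MapsHomeomorphicallyWith {A : Type u} {B : Type u₁} (τA : TopologicalSpace A)
    (τB : TopologicalSpace B) (S : Set A) (T : Set B) (f : A → B) : Prop :=
  ∃ h : @Homeomorph ↥S ↥T (subTop τA S) (subTop τB T), ∀ a : ↥S, ((h a : ↥T) : B) = f (a : A)

namespace GroupoidOn

variable {G : Type u} {X : Type v}

/-- There is a continuous admissible local section through `g` with values in `W`
(`W` carrying the explicitly given topology `τW`). -/
def HasSectionThrough [TopologicalSpace X] (𝒢 : GroupoidOn G X) (W : Set G)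
    (τW : TopologicalSpace ↥W) (g : G) : Prop := by
  letI := τW
  exact ∃ (U : Set X) (s : X → G), IsOpen U ∧ 𝒢.src g ∈ U ∧ s (𝒢.src g) = g ∧
    (∀ x ∈ U, 𝒢.src (s x) = x) ∧
    IsOpen ((fun x => 𝒢.tgt (s x)) '' U) ∧
    Set.InjOn (fun x => 𝒢.tgt (s x)) U ∧
    ContinuousOn (fun x => 𝒢.tgt (s x)) U ∧
    (∀ V ⊆ U, IsOpen V → IsOpen ((fun x => 𝒢.tgt (s x)) '' V)) ∧
    ∃ hsW : ∀ x ∈ U, s x ∈ W,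
      Continuous fun x : ↥U => (⟨s x.1, hsW x.1 x.2⟩ : ↥W)

/-- `(α, β, W)` is locally sectionable. -/
def LocallySectionableOn [TopologicalSpace X] (𝒢 : GroupoidOn G X) (W : Set G)
    (τW : TopologicalSpace ↥W) : Prop :=
  ∀ g ∈ W, 𝒢.HasSectionThrough W τW g

/-- a locally sectionable topological groupoid: through every element there is a
continuous admissible local section. -/
def LocallySectionable [TopologicalSpace G] [TopologicalSpace X] (𝒢 : GroupoidOn G X) : Prop :=
  ∀ g : G, ∃ (U : Set X) (s : X → G), IsOpen U ∧ 𝒢.src g ∈ U ∧ s (𝒢.src g) = g ∧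
    (∀ x ∈ U, 𝒢.src (s x) = x) ∧
    IsOpen ((fun x => 𝒢.tgt (s x)) '' U) ∧
    Set.InjOn (fun x => 𝒢.tgt (s x)) U ∧
    ContinuousOn (fun x => 𝒢.tgt (s x)) U ∧
    (∀ V ⊆ U, IsOpen V → IsOpen ((fun x => 𝒢.tgt (s x)) '' V)) ∧
    ContinuousOn s U

/-- a locally trivial groupoid on a topological space: every point has an open
neighbourhood `U` with a section `s : U → G_x` of `β`. -/
def LocallyTrivial [TopologicalSpace X] (𝒢 : GroupoidOn G X) : Prop :=
  ∀ x : X, ∃ (U : Set X) (s : X → G), IsOpen U ∧ x ∈ U ∧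
    ∀ y ∈ U, 𝒢.tgt (s y) = y ∧ 𝒢.src (s y) = x

end GroupoidOn

/-- a locally topological groupoid `(G, W)` in the sense of Pradines: `W` is a topological
space containing the identities with `W = W⁻¹`, the difference map is continuous where defined
on `W`, source and target are continuous on `W`, `(α, β, W)` is locally sectionable and `W`
generates `G`. -/
def IsLocTopGroupoid {G : Type u} {X : Type v} [TopologicalSpace X] (𝒢 : GroupoidOn G X)
    (W : Set G) (τW : TopologicalSpace ↥W) : Prop := by
  letI := τW
  exact
    (∀ x, 𝒢.e x ∈ W) ∧
    (𝒢.invSet W = W) ∧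
    (IsOpen {q : {q : ↥W × ↥W // 𝒢.src (q.1 : G) = 𝒢.src (q.2 : G)} |
        𝒢.mul (𝒢.inv (q.1.1 : G)) (q.1.2 : G) ∈ W} ∧
      Continuous fun q : ↥{q : {q : ↥W × ↥W // 𝒢.src (q.1 : G) = 𝒢.src (q.2 : G)} |
          𝒢.mul (𝒢.inv (q.1.1 : G)) (q.1.2 : G) ∈ W} =>
        (⟨𝒢.mul (𝒢.inv (q.1.1.1 : G)) (q.1.1.2 : G), q.2⟩ : ↥W)) ∧
    (Continuous fun a : ↥W => 𝒢.src (a : G)) ∧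
    (Continuous fun a : ↥W => 𝒢.tgt (a : G)) ∧
    𝒢.LocallySectionableOn W τW ∧
    𝒢.Generates W

/-- monodromy groupoid data for `(G, W)`: a groupoid `M` on the same object set together
with an injection `ι : W → M` which is a pregroupoid morphism over the identity on objects,
whose image generates `M`, and which is universal among pregroupoid morphisms on `W`. -/
structure IsMonodromy {G : Type u} {X : Type v} {M : Type u₁} (𝒢 : GroupoidOn G X) (W : Set G)
    (𝓜 : GroupoidOn M X) (ι : G → M) : Prop where
  pre : IsPreGrpdHom 𝒢 W 𝓜 ι id
  injOn : Set.InjOn ι W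
  generates : 𝓜.Generates (ι '' W)
  univ : ∀ {H : Type u₂} {Y : Type v₂} (ℋ : GroupoidOn H Y) (f : G → H) (fo : X → Y),
    IsPreGrpdHom 𝒢 W ℋ f fo →
    ∃ f' : M → H, IsGrpdHom 𝓜 ℋ f' fo ∧ (∀ a ∈ W, f' (ι a) = f a) ∧
      ∀ g' : M → H, IsGrpdHom 𝓜 ℋ g' fo → (∀ a ∈ W, g' (ι a) = f a) → g' = f'

/-- a subset `U` of a space is liftable: open, path-connected, and the inclusion maps each
fundamental group of `U` trivially. -/
def Liftable {Y : Type u} [TopologicalSpace Y] (U : Set Y) : Prop :=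
  IsOpen U ∧ IsPathConnected U ∧
  ∀ (y : Y) (hy : y ∈ U) (γ : Path (⟨y, hy⟩ : ↥U) ⟨y, hy⟩),
    (γ.map continuous_subtype_val).Homotopic (Path.refl y)

/-- the space `Y` admits a (simply connected) universal covering. -/
def HasUniversalCover (Y : Type u) [TopologicalSpace Y] : Prop :=
  ∃ (E : Type u) (τE : TopologicalSpace E) (q : E → Y),
    @IsCoveringMap E Y τE _ q ∧ @SimplyConnectedSpace E τE

/-- a star topological groupoid: each star carries a topology and all (left) translations
between stars are homeomorphisms. -/
def IsStarTopGroupoid {G : Type u} {X : Type v} (𝒢 : GroupoidOn G X)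
    (τ : ∀ x, TopologicalSpace ↥(𝒢.star x)) : Prop :=
  ∀ a : G, ∃ h : @Homeomorph ↥(𝒢.star (𝒢.tgt a)) ↥(𝒢.star (𝒢.src a)) (τ _) (τ _),
    ∀ b : ↥(𝒢.star (𝒢.tgt a)), ((h b : ↥(𝒢.star (𝒢.src a))) : G) = 𝒢.mul a (b : G)

/-- `p : M → G` is, on each star, a universal covering map (with respect to the given
star topologies): the restriction `M_x → G_x` is a covering map with simply connected domain. -/
def StarUniversalCoveringMap {M : Type u₁} {G : Type u} {X : Type v}
    (𝓜 : GroupoidOn M X) (𝒢 : GroupoidOn G X)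
    (τM : ∀ x, TopologicalSpace ↥(𝓜.star x)) (τG : ∀ x, TopologicalSpace ↥(𝒢.star x))
    (p : M → G) : Prop :=
  ∀ x : X, ∃ hx : ∀ m : ↥(𝓜.star x), p (m : M) ∈ 𝒢.star x,
    @IsCoveringMap ↥(𝓜.star x) ↥(𝒢.star x) (τM x) (τG x) (fun m => ⟨p (m : M), hx m⟩) ∧
    @SimplyConnectedSpace ↥(𝓜.star x) (τM x)

/-- an isomorphism of star topological groupoids over the identity on objects. -/
def IsStarTopIso {M : Type u₁} {P : Type u₂} {X : Type v}
    (𝓜 : GroupoidOn M X) (𝒬 : GroupoidOn P X)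
    (τM : ∀ x, TopologicalSpace ↥(𝓜.star x)) (τP : ∀ x, TopologicalSpace ↥(𝒬.star x))
    (φ : M → P) : Prop :=
  IsGrpdHom 𝓜 𝒬 φ id ∧ Function.Bijective φ ∧
  ∀ x, ∃ h : @Homeomorph ↥(𝓜.star x) ↥(𝒬.star x) (τM x) (τP x),
    ∀ m : ↥(𝓜.star x), ((h m : ↥(𝒬.star x)) : P) = φ (m : M)

/-- an atlas `(U i, s i)` exhibiting a groupoid as compatible locally trivial: the `U i`
form an open cover of `X` which is a base for its topology, each `s i x hx : U i → G_x` is a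
local section of `β` through the identity at `x`, and any two local sections about `x` agree
on some basic open set containing `x`. -/
structure IsCompatLocTriv {G : Type u} {X : Type v} {ι : Type w} [TopologicalSpace X]
    (𝒢 : GroupoidOn G X) (U : ι → Set X) (s : ∀ i, ∀ x ∈ U i, X → G) : Prop where
  isOpen : ∀ i, IsOpen (U i)
  covers : ∀ x : X, ∃ i, x ∈ U i
  isBasis : TopologicalSpace.IsTopologicalBasis (Set.range U)
  sec_tgt : ∀ i x (hx : x ∈ U i), ∀ y ∈ U i, 𝒢.tgt (s i x hx y) = y
  sec_src : ∀ i x (hx : x ∈ U i), ∀ y ∈ U i, 𝒢.src (s i x hx y) = x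
  sec_id : ∀ i x (hx : x ∈ U i), s i x hx x = 𝒢.e x
  compat : ∀ x i j (hxi : x ∈ U i) (hxj : x ∈ U j), ∃ k, ∃ hxk : x ∈ U k,
    U k ⊆ U i ∩ U j ∧ ∀ y ∈ U k, s i x hxi y = s j x hxj y

/-- the basic set `(Ũ_{x,i})⁻¹ a (Ũ_{y,j})` associated with a compatible locally trivial
atlas, where `Ũ_{x,i} = s i x hxi '' (U i)`. -/
def basicSet {G : Type u} {X : Type v} {ι : Type w} (𝒢 : GroupoidOn G X) {U : ι → Set X}
    (s : ∀ i, ∀ x ∈ U i, X → G) (i j : ι) {x y : X} (hxi : x ∈ U i) (hyj : y ∈ U j)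
    (a : G) : Set G :=
  {g | ∃ z ∈ U i, ∃ w ∈ U j,
    g = 𝒢.mul (𝒢.mul (𝒢.inv (s i x hxi z)) a) (s j y hyj w)}

/-- the topology on `G` generated by the basic sets `(Ũ_{α a, i})⁻¹ a (Ũ_{β a, j})`. -/
def cltTopology {G : Type u} {X : Type v} {ι : Type w} (𝒢 : GroupoidOn G X) {U : ι → Set X}
    (s : ∀ i, ∀ x ∈ U i, X → G) : TopologicalSpace G :=
  TopologicalSpace.generateFrom
    {B | ∃ (a : G) (i j : ι) (hxi : 𝒢.src a ∈ U i) (hyj : 𝒢.tgt a ∈ U j),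
      B = basicSet 𝒢 s i j hxi hyj a}

open CategoryTheory

/-- The morphisms of the fundamental groupoid `π₁ Z`, bundled into a single set:
homotopy classes rel endpoints of paths in `Z`, together with their endpoints. -/
def piMor (Z : Type u) [TopologicalSpace Z] : Type u :=
  Σ x y : FundamentalGroupoid Z, x ⟶ y

lemma FundamentalGroupoid.ext' {Z : Type u} {p q : FundamentalGroupoid Z}
    (h : p.as = q.as) : p = q := by
  cases p; cases q; cases h; rfl

attribute [local instance] Classical.propDecidable

/-- The fundamental groupoid `π₁ Z` of a topological space `Z`, as a groupoid on `Z`: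
composition is concatenation of (homotopy classes of) paths. -/
noncomputable def piGroupoid (Z : Type u) [TopologicalSpace Z] :
    GroupoidOn (piMor Z) Z where
  src a := a.1.as
  tgt a := a.2.1.as
  e x := ⟨⟨x⟩, ⟨x⟩, 𝟙 (⟨x⟩ : FundamentalGroupoid Z)⟩
  mul a b := if h : a.2.1 = b.1 then ⟨a.1, b.2.1, a.2.2 ≫ eqToHom h ≫ b.2.2⟩ else a
  inv a := ⟨a.2.1, a.1, Groupoid.inv a.2.2⟩
  src_e x := rfl
  tgt_e x := rfl
  src_mul a b h := by unfold piMor at *; rw [dif_pos (FundamentalGroupoid.ext' h)]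
  tgt_mul a b h := by unfold piMor at *; rw [dif_pos (FundamentalGroupoid.ext' h)]
  mul_assoc := by
    unfold piMor at *
    rintro ⟨ax, ay, f⟩ ⟨bx, by', g⟩ ⟨cx, cy, k⟩ h1 h2
    obtain rfl : ay = bx := FundamentalGroupoid.ext' h1
    obtain rfl : by' = cx := FundamentalGroupoid.ext' h2
    dsimp only
    rw [dif_pos rfl, dif_pos rfl, dif_pos rfl, dif_pos rfl]
    simp
  e_mul := by
    unfold piMor at *
    rintro ⟨⟨x⟩, ay, f⟩
    dsimp only
    rw [dif_pos rfl]
    simp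
  mul_e := by
    unfold piMor at *
    rintro ⟨ax, ⟨y⟩, f⟩
    dsimp only
    rw [dif_pos rfl]
    simp
  src_inv a := rfl
  tgt_inv a := rfl
  mul_inv := by
    unfold piMor at *
    rintro ⟨⟨x⟩, ay, f⟩
    dsimp only
    rw [dif_pos rfl]
    simp
  inv_mul := by
    unfold piMor at *
    rintro ⟨ax, ⟨y⟩, f⟩
    dsimp only
    rw [dif_pos rfl]
    simp

/-- The homotopy class of a path, as a morphism of the fundamental groupoid. -/
def pathClass {Z : Type u} [TopologicalSpace Z] {x y : Z} (γ : Path x y) :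
    (⟨x⟩ : FundamentalGroupoid Z) ⟶ ⟨y⟩ :=
  Quotient.mk (Path.Homotopic.setoid x y) γ

section Aux

variable {Z : Type u} [TopologicalSpace Z]

lemma homotopic_of_loops {V : Set Z}
    (h : ∀ (y : Z) (γ : Path y y), Set.range γ ⊆ V → γ.Homotopic (Path.refl y))
    {x y : Z} (γ₁ γ₂ : Path x y) (h1 : Set.range γ₁ ⊆ V) (h2 : Set.range γ₂ ⊆ V) :
    γ₁.Homotopic γ₂ := by
  have hr : Set.range (γ₁.trans γ₂.symm) ⊆ V := by
    rw [Path.trans_range, Path.symm_range]; exact Set.union_subset h1 h2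
  have hl : (γ₁.trans γ₂.symm).Homotopic (Path.refl x) := h x _ hr
  have e1 : γ₁.Homotopic (γ₁.trans (Path.refl y)) := ⟨(Path.Homotopy.transRefl γ₁).symm⟩
  have e2 : (γ₁.trans (Path.refl y)).Homotopic (γ₁.trans (γ₂.symm.trans γ₂)) :=
    Path.Homotopic.hcomp (Path.Homotopic.refl γ₁) ⟨Path.Homotopy.reflSymmTrans γ₂⟩
  have e3 : (γ₁.trans (γ₂.symm.trans γ₂)).Homotopic ((γ₁.trans γ₂.symm).trans γ₂) :=
    ⟨(Path.Homotopy.transAssoc γ₁ γ₂.symm γ₂).symm⟩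
  have e4 : ((γ₁.trans γ₂.symm).trans γ₂).Homotopic ((Path.refl x).trans γ₂) :=
    Path.Homotopic.hcomp hl (Path.Homotopic.refl γ₂)
  have e5 : ((Path.refl x).trans γ₂).Homotopic γ₂ := ⟨Path.Homotopy.reflTrans γ₂⟩
  exact (((e1.trans e2).trans e3).trans e4).trans e5

/-- The property defining the canonical cover. -/
def GoodSet (Z : Type u) [TopologicalSpace Z] : Set (Set Z) :=
  {V : Set Z | IsOpen V ∧ IsPathConnected V ∧
    ∀ (x y : Z) (γ₁ γ₂ : Path x y),
      Set.range γ₁ ⊆ V → Set.range γ₂ ⊆ V → γ₁.Homotopic γ₂}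

/-- The canonical local section of the fundamental groupoid. -/
noncomputable def secAux (V : Set Z) (x y : Z) : piMor Z :=
  if h : x ∈ V ∧ y ∈ V ∧ IsPathConnected V then
    ⟨⟨x⟩, ⟨y⟩, pathClass (h.2.2.joinedIn x h.1 y h.2.1).somePath⟩
  else ⟨⟨y⟩, ⟨y⟩, 𝟙 _⟩

lemma secAux_eq {V : Set Z} {x y : Z} (hx : x ∈ V) (hy : y ∈ V) (hV : IsPathConnected V) :
    secAux V x y =
      ⟨⟨x⟩, ⟨y⟩, pathClass ((hV.joinedIn x hx y hy).somePath)⟩ := by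
  rw [secAux]; exact dif_pos ⟨hx, hy, hV⟩

lemma range_somePath_subset {V : Set Z} {x y : Z} (h : JoinedIn V x y) :
    Set.range h.somePath ⊆ V := by
  rintro _ ⟨t, rfl⟩; exact h.somePath_mem t

end Aux

/-- Let `Z` be a locally path connected and semilocally 1-connected
topological space.  Then the fundamental groupoid `π₁ Z` is a compatible locally trivial
groupoid on `Z`: the cover consisting of all open, path connected subsets `V` of `Z` such
that any two paths in `V` with the same endpoints are homotopic in `Z` is an open cover of
`Z` which is a base for its topology, and the local sections, sending `y ∈ U i` to the
homotopy class of a path in `U i` from `x` to `y`, are well-defined sections of `β`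
satisfying the compatibility condition. -/
theorem fundamentalGroupoid_compatLocTriv (Z : Type u) [TopologicalSpace Z]
    [LocallyPathConnectedSpace Z]
    (hslc : ∀ z : Z, ∃ V : Set Z, IsOpen V ∧ z ∈ V ∧
      ∀ (y : Z) (γ : Path y y), Set.range γ ⊆ V → γ.Homotopic (Path.refl y)) :
    ∃ (ι : Type u) (U : ι → Set Z) (s : ∀ i, ∀ x ∈ U i, Z → piMor Z),
      Set.range U = {V : Set Z | IsOpen V ∧ IsPathConnected V ∧
        ∀ (x y : Z) (γ₁ γ₂ : Path x y),
          Set.range γ₁ ⊆ V → Set.range γ₂ ⊆ V → γ₁.Homotopic γ₂} ∧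
      IsCompatLocTriv (piGroupoid Z) U s ∧
      ∀ i x (hx : x ∈ U i), ∀ y ∈ U i, ∃ γ : Path x y, Set.range γ ⊆ U i ∧
        s i x hx y = ⟨⟨x⟩, ⟨y⟩, pathClass γ⟩ := by
  classical
  refine ⟨↥(GoodSet Z), fun i => (i : Set Z), fun i x _ y => secAux (i : Set Z) x y, ?_, ?_, ?_⟩
  · exact Subtype.range_coe
  · constructor
    · exact fun i => i.2.1
    · intro x
      obtain ⟨V', hV'o, hxV', hV'⟩ := hslc x
      have hWgood : pathComponentIn V' x ∈ GoodSet Z :=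
        ⟨hV'o.pathComponentIn x, isPathConnected_pathComponentIn hxV',
          fun a b γ₁ γ₂ h1 h2 => homotopic_of_loops hV' γ₁ γ₂
            (h1.trans pathComponentIn_subset) (h2.trans pathComponentIn_subset)⟩
      exact ⟨⟨_, hWgood⟩, mem_pathComponentIn_self hxV'⟩
    · refine TopologicalSpace.isTopologicalBasis_of_isOpen_of_nhds ?_ ?_
      · rintro u ⟨i, rfl⟩; exact i.2.1
      · intro a u ha hu
        obtain ⟨V', hV'o, haV', hV'⟩ := hslc a
        have hWgood : pathComponentIn (u ∩ V') a ∈ GoodSet Z :=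
          ⟨(hu.inter hV'o).pathComponentIn a, isPathConnected_pathComponentIn ⟨ha, haV'⟩,
            fun b c γ₁ γ₂ h1 h2 => homotopic_of_loops hV' γ₁ γ₂
              (h1.trans (pathComponentIn_subset.trans Set.inter_subset_right))
              (h2.trans (pathComponentIn_subset.trans Set.inter_subset_right))⟩
        exact ⟨pathComponentIn (u ∩ V') a, ⟨⟨_, hWgood⟩, rfl⟩,
          mem_pathComponentIn_self ⟨ha, haV'⟩,
          pathComponentIn_subset.trans Set.inter_subset_left⟩
    · intro i x hx y hy
      rw [secAux_eq hx hy i.2.2.1]; rfl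
    · intro i x hx y hy
      rw [secAux_eq hx hy i.2.2.1]; rfl
    · intro i x hx
      rw [secAux_eq hx hx i.2.2.1]
      have h := i.2.2.2 x x ((i.2.2.1.joinedIn x hx x hx).somePath) (Path.refl x)
        (range_somePath_subset _)
        (by rw [Path.refl_range]; exact Set.singleton_subset_iff.2 hx)
      exact congrArg (fun p => (⟨⟨x⟩, ⟨x⟩, p⟩ : piMor Z)) (Quotient.sound h)
    · intro x i j hxi hxj
      have hxij : x ∈ (i : Set Z) ∩ (j : Set Z) := ⟨hxi, hxj⟩
      have hWsub : pathComponentIn ((i : Set Z) ∩ (j : Set Z)) x ⊆ (i : Set Z) ∩ (j : Set Z) :=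
        pathComponentIn_subset
      have hWgood : pathComponentIn ((i : Set Z) ∩ (j : Set Z)) x ∈ GoodSet Z :=
        ⟨(i.2.1.inter j.2.1).pathComponentIn x, isPathConnected_pathComponentIn hxij,
          fun a b γ₁ γ₂ h1 h2 => i.2.2.2 a b γ₁ γ₂
            (h1.trans (hWsub.trans Set.inter_subset_left))
            (h2.trans (hWsub.trans Set.inter_subset_left))⟩
      refine ⟨⟨_, hWgood⟩, mem_pathComponentIn_self hxij, hWsub, fun y hy => ?_⟩
      have hδ : JoinedIn ((i : Set Z) ∩ (j : Set Z)) x y := hy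
      have hyi : y ∈ (i : Set Z) := (hWsub hy).1
      have hyj : y ∈ (j : Set Z) := (hWsub hy).2
      rw [secAux_eq hxi hyi i.2.2.1, secAux_eq hxj hyj j.2.2.1]
      have h1 : ((i.2.2.1.joinedIn x hxi y hyi).somePath).Homotopic hδ.somePath :=
        i.2.2.2 x y _ _ (range_somePath_subset _)
          ((range_somePath_subset hδ).trans Set.inter_subset_left)
      have h2 : ((j.2.2.1.joinedIn x hxj y hyj).somePath).Homotopic hδ.somePath :=
        j.2.2.2 x y _ _ (range_somePath_subset _)
          ((range_somePath_subset hδ).trans Set.inter_subset_right)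
      exact congrArg (fun p => (⟨⟨x⟩, ⟨y⟩, p⟩ : piMor Z))
        (Quotient.sound (h1.trans h2.symm))
  · intro i x hx y hy
    exact ⟨(i.2.2.1.joinedIn x hx y hy).somePath, range_somePath_subset _,
      secAux_eq hx hy i.2.2.1⟩
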